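/- Let A be a unital C*-algebra and let a, b be elements of the closed unit ball of A with a positive. Then ‖2a − a² + (1 − a) b (1 − a)‖ ≤ 1. (This is the C*-algebra instance of the Bergman operator inequality ‖2a − a^[2] + P₀(a)(b)‖ ≤ 1 for JB*-triples, since for positive a in a C*-algebra a^[2] = a² and P₀(a)(b) = (1 − a) b (1 − a).) -/

import Mathlib

/-- In a unital C*-algebra `A`, if `a, b` are in the closed unit ball
with `a` positive, then `‖2a - a² + (1 - a) b (1 - a)‖ ≤ 1`. -/
theorem norm_bergman_operator_le_one
    {A : Type*} [NormedRing A] [StarRing A] [CStarRing A] [CompleteSpace A]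
    [NormedAlgebra ℂ A] [StarModule ℂ A] [PartialOrder A] [StarOrderedRing A]
    (a b : A) (ha : 0 ≤ a) (hna : ‖a‖ ≤ 1) (hnb : ‖b‖ ≤ 1) :
    ‖2 • a - a ^ 2 + (1 - a) * b * (1 - a)‖ ≤ 1 := by
  letI : CStarAlgebra A := { }
  set c : A := 1 - a with hc
  set z : A := 1 - b with hz
  have ha1 : a ≤ 1 := (CStarAlgebra.norm_le_one_iff_of_nonneg a ha).mp hna
  have hc0 : 0 ≤ c := by rwa [hc, sub_nonneg]
  have hcsa : IsSelfAdjoint c := IsSelfAdjoint.of_nonneg hc0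
  have hnc : ‖c‖ ≤ 1 := (CStarAlgebra.norm_le_one_iff_of_nonneg c hc0).mpr (by
    rw [hc]; simpa using ha)
  -- c^2 ≤ 1
  have hc2 : c * c ≤ 1 := by
    refine (CStarAlgebra.norm_le_one_iff_of_nonneg (c * c) ?_).mp ?_
    · simpa [hcsa.star_eq] using star_mul_self_nonneg c
    · calc ‖c * c‖ ≤ ‖c‖ * ‖c‖ := norm_mul_le c c
        _ ≤ 1 := by nlinarith [norm_nonneg c]
  -- star b * b ≤ 1
  have hbb : star b * b ≤ 1 := by
    refine (CStarAlgebra.norm_le_one_iff_of_nonneg (star b * b) (star_mul_self_nonneg b)).mp ?_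
    rw [CStarRing.norm_star_mul_self]
    nlinarith [norm_nonneg b]
  -- star z * z ≤ z + star z
  have hzz : star z * z ≤ z + star z := by
    have : star z * z = (z + star z) - (1 - star b * b) := by
      rw [hz, star_sub, star_one]; noncomm_ring
    rw [this]
    exact sub_le_self (z + star z) (sub_nonneg.mpr hbb)
  -- key inequality
  have key : c * (star z * (c * c) * z) * c ≤ c * (z + star z) * c := by
    exact hcsa.conjugate_le_conjugate
      (le_trans (by simpa using star_left_conjugate_le_conjugate hc2 z) hzz)
  set T : A := 2 • a - a ^ 2 + (1 - a) * b * (1 - a) with hT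
  have hTeq : T = 1 - c * z * c := by rw [hT, hc, hz]; noncomm_ring
  have hTT : star T * T ≤ 1 := by
    have h1 : star T * T = 1 - c * (z + star z) * c + c * (star z * (c * c) * z) * c := by
      rw [hTeq, star_sub, star_one, star_mul, star_mul, hcsa.star_eq]
      noncomm_ring
    rw [h1]
    calc 1 - c * (z + star z) * c + c * (star z * (c * c) * z) * c
        ≤ 1 - c * (z + star z) * c + c * (z + star z) * c := by
          exact add_le_add_right key _
      _ = 1 := sub_add_cancel 1 _
  have hTT0 : 0 ≤ star T * T := star_mul_self_nonneg T
  have hnTT : ‖star T * T‖ ≤ 1 := (CStarAlgebra.norm_le_one_iff_of_nonneg _ hTT0).mpr hTT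
  rw [CStarRing.norm_star_mul_self] at hnTT
  nlinarith [norm_nonneg T]
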